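/- If a_0ⁿ, a_1ⁿ, … are finitely supported families of non-negative integers with total sum sⁿ := Σ_k a_kⁿ → ∞ and a_kⁿ/sⁿ → p_k for each k, where p is a probability distribution on ℤ≥0, then liminf_{n→∞} h(a_0ⁿ, a_1ⁿ, …)/sⁿ ≥ H(p), where h(a_0,…,a_K) = log of the multinomial coefficient (a_0+⋯+a_K)!/(a_0!⋯a_K!). -/

import Mathlib

open Filter
open scoped ENNReal

section Aux
open Real Nat Finset

lemma log_fact_lower (n : ℕ) : n * Real.log n - n ≤ Real.log (n !) := by
  induction n with
  | zero => simp
  | succ n ih =>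
    have hpos : (0:ℝ) < (n ! : ℝ) := by positivity
    have hpos1 : (0:ℝ) < (n:ℝ) + 1 := by positivity
    have hlog : Real.log ((n+1)! : ℕ) = Real.log ((n:ℝ)+1) + Real.log (n !) := by
      rw [Nat.factorial_succ]; push_cast
      rw [Real.log_mul (by positivity) (ne_of_gt hpos)]
    rw [hlog]
    push_cast
    rcases Nat.eq_zero_or_pos n with hn | hn
    · subst hn; simp
    · have hn' : (0:ℝ) < n := by exact_mod_cast hn
      have key : Real.log ((n:ℝ)+1) - Real.log n ≤ 1 / n := by
        have := Real.log_le_sub_one_of_pos (x := ((n:ℝ)+1)/n) (by positivity)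
        rw [Real.log_div (by positivity) (ne_of_gt hn')] at this
        have : Real.log ((n:ℝ)+1) - Real.log n ≤ ((n:ℝ)+1)/n - 1 := this
        calc Real.log ((n:ℝ)+1) - Real.log n ≤ ((n:ℝ)+1)/n - 1 := this
          _ = 1/n := by field_simp; ring
      have key2 : (n:ℝ) * (Real.log ((n:ℝ)+1) - Real.log n) ≤ 1 := by
        have := mul_le_mul_of_nonneg_left key (le_of_lt hn')
        rwa [mul_one_div, div_self (ne_of_gt hn')] at this
      nlinarith [ih]

lemma log_fact_upper (n : ℕ) : Real.log (n !) ≤ n * Real.log n - n + (1 + Real.log n) := by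
  induction n with
  | zero => simp
  | succ n ih =>
    rcases Nat.eq_zero_or_pos n with hn | hn
    · subst hn; norm_num
    · have hn' : (0:ℝ) < n := by exact_mod_cast hn
      have hpos : (0:ℝ) < (n ! : ℝ) := by positivity
      have hlog : Real.log ((n+1)! : ℕ) = Real.log ((n:ℝ)+1) + Real.log (n !) := by
        rw [Nat.factorial_succ]; push_cast
        rw [Real.log_mul (by positivity) (ne_of_gt hpos)]
      rw [hlog]
      push_cast
      have key : 1/((n:ℝ)+1) ≤ Real.log ((n:ℝ)+1) - Real.log n := by
        have := Real.log_le_sub_one_of_pos (x := (n:ℝ)/((n:ℝ)+1)) (by positivity)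
        rw [Real.log_div (ne_of_gt hn') (by positivity)] at this
        have h2 : (n:ℝ)/((n:ℝ)+1) - 1 = -(1/((n:ℝ)+1)) := by field_simp; ring
        linarith [this, h2 ▸ this]
      have key2 : 1 ≤ ((n:ℝ)+1) * (Real.log ((n:ℝ)+1) - Real.log n) := by
        have := mul_le_mul_of_nonneg_left key (by positivity : (0:ℝ) ≤ (n:ℝ)+1)
        rwa [mul_one_div, div_self (by positivity)] at this
      nlinarith [ih]

lemma multinomial_lower (f : ℕ →₀ ℕ) (K : ℕ) :
    (∑ k ∈ f.support, f k)! ≤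
      Nat.multinomial f.support f *
        ((∏ k ∈ Finset.range K, (f k)!) *
          ((∑ k ∈ f.support, f k) - ∑ k ∈ Finset.range K, f k)!) := by
  set s := ∑ k ∈ f.support, f k with hs
  set t := ∑ k ∈ Finset.range K, f k with ht
  -- sum over range K equals sum over support ∩ range K
  have hsum_inter : ∑ k ∈ f.support ∩ Finset.range K, f k = t := by
    rw [ht]
    apply Finset.sum_subset (Finset.inter_subset_right)
    intro x hx hnx
    by_contra h
    exact hnx (Finset.mem_inter.2 ⟨Finsupp.mem_support_iff.2 h, hx⟩)
  have hsplit : ∑ k ∈ f.support ∩ Finset.range K, f k +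
      ∑ k ∈ f.support \ Finset.range K, f k = s := by
    rw [hs, ← Finset.sum_inter_add_sum_sdiff f.support (Finset.range K) f]
  have hts : t ≤ s := by omega
  have hdiff : ∑ k ∈ f.support \ Finset.range K, f k = s - t := by omega
  have h1 : ∏ k ∈ f.support, (f k)! ≤ (∏ k ∈ Finset.range K, (f k)!) * (s - t)! := by
    rw [← Finset.prod_inter_mul_prod_diff f.support (Finset.range K) (fun k => (f k)!)]
    apply Nat.mul_le_mul
    · apply Finset.prod_le_prod_of_subset_of_one_le' (Finset.inter_subset_right)
      intro i _ _; exact Nat.one_le_iff_ne_zero.2 (Nat.factorial_ne_zero _)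
    · rw [← hdiff]
      exact Nat.le_of_dvd (Nat.factorial_pos _)
        (Nat.prod_factorial_dvd_factorial_sum _ _)
  calc s ! = (∏ k ∈ f.support, (f k)!) * Nat.multinomial f.support f :=
        (Nat.multinomial_spec _ _).symm
    _ ≤ ((∏ k ∈ Finset.range K, (f k)!) * (s - t)!) * Nat.multinomial f.support f :=
        Nat.mul_le_mul_right _ h1
    _ = _ := by ring

lemma smul_negMulLog (S c : ℝ) (hS : 0 < S) (hc : 0 ≤ c) :
    S * Real.negMulLog (c / S) = c * Real.log S - c * Real.log c := by
  rcases eq_or_lt_of_le hc with h | h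
  · simp [← h, Real.negMulLog]
  · rw [Real.negMulLog, Real.log_div (ne_of_gt h) (ne_of_gt hS)]
    field_simp; ring

lemma log_nat_le {c s : ℕ} (hcs : c ≤ s) (hs1 : 1 ≤ s) :
    Real.log (c : ℝ) ≤ Real.log (s : ℝ) := by
  rcases Nat.eq_zero_or_pos c with h | h
  · subst h; simp
    exact Real.log_nonneg (by exact_mod_cast hs1)
  · exact Real.log_le_log (by exact_mod_cast h) (by exact_mod_cast hcs)

lemma per_bound (f : ℕ →₀ ℕ) (K : ℕ) (s : ℕ)
    (hseq : s = ∑ k ∈ f.support, f k) (hs1 : 1 ≤ s) :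
    (∑ k ∈ Finset.range K, Real.negMulLog ((f k : ℝ) / (s : ℝ)))
      + Real.negMulLog (1 - ∑ k ∈ Finset.range K, (f k : ℝ) / (s : ℝ))
      - (K + 1) * (1 + Real.log (s : ℝ)) / (s : ℝ)
    ≤ Real.log (Nat.multinomial f.support f) / (s : ℝ) := by
  set t : ℕ := ∑ k ∈ Finset.range K, f k with ht
  have hfk_le : ∀ k, f k ≤ s := by
    intro k
    rcases (em (k ∈ f.support)) with h | h
    · rw [hseq]; exact Finset.single_le_sum (fun i _ => Nat.zero_le _) h
    · simp [Finsupp.notMem_support_iff.1 h]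
  have hts : t ≤ s := by
    have hsum_inter : ∑ k ∈ f.support ∩ Finset.range K, f k = t := by
      rw [ht]
      apply Finset.sum_subset (Finset.inter_subset_right)
      intro x hx hnx
      by_contra h
      exact hnx (Finset.mem_inter.2 ⟨Finsupp.mem_support_iff.2 h, hx⟩)
    rw [hseq, ← Finset.sum_inter_add_sum_sdiff f.support (Finset.range K) f]
    omega
  set r : ℕ := s - t with hr
  have hrs : r ≤ s := Nat.sub_le _ _
  have hS0 : (0:ℝ) < (s:ℝ) := by exact_mod_cast hs1
  have hTR : (t:ℝ) + (r:ℝ) = (s:ℝ) := by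
    have : t + r = s := by omega
    exact_mod_cast this
  set M : ℝ := (Nat.multinomial f.support f : ℝ) with hM
  -- step 1: log s! ≤ log M + ∑ log (f k)! + log r!
  have hfac : ((s)! : ℝ) ≤ M * ((∏ k ∈ Finset.range K, ((f k)!) : ℕ) * ((r)! : ℕ)) := by
    have h := multinomial_lower f K
    rw [← hseq, ← ht] at h
    rw [hM]
    exact_mod_cast h
  have hlog1 : Real.log ((s)! : ℕ) ≤
      Real.log M + ((∑ k ∈ Finset.range K, Real.log ((f k)! : ℕ)) + Real.log ((r)! : ℕ)) := by
    have hMpos : (0:ℝ) < M := by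
      rw [hM]; exact_mod_cast Nat.multinomial_pos _ _
    have hPpos : (0:ℝ) < ((∏ k ∈ Finset.range K, ((f k)!) : ℕ) : ℝ) := by
      exact_mod_cast Finset.prod_pos (fun i _ => Nat.factorial_pos _)
    have hRpos : (0:ℝ) < (((r)! : ℕ) : ℝ) := by exact_mod_cast Nat.factorial_pos r
    calc Real.log ((s)! : ℕ) ≤ Real.log (M * ((∏ k ∈ Finset.range K, ((f k)!) : ℕ) * ((r)! : ℕ))) :=
          Real.log_le_log (by exact_mod_cast Nat.factorial_pos s) hfac
      _ = Real.log M + Real.log ((∏ k ∈ Finset.range K, ((f k)!) : ℕ) * (((r)! : ℕ) : ℝ)) := by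
          rw [Real.log_mul (ne_of_gt hMpos) (by positivity)]
      _ = Real.log M + (Real.log ((∏ k ∈ Finset.range K, ((f k)!) : ℕ) : ℝ) + Real.log (((r)! : ℕ) : ℝ)) := by
          rw [Real.log_mul (ne_of_gt hPpos) (ne_of_gt hRpos)]
      _ = _ := by
          congr 2
          push_cast
          rw [Real.log_prod]
          intro i _
          exact_mod_cast ne_of_gt (Nat.cast_pos.2 (Nat.factorial_pos (f i)) : (0:ℝ) < _)
  -- step 2: combine with Stirling bounds
  have hlb : (s:ℝ) * Real.log (s:ℝ) - (s:ℝ)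
      - (∑ k ∈ Finset.range K, ((f k : ℝ) * Real.log (f k : ℝ) - (f k : ℝ) + (1 + Real.log (f k : ℝ))))
      - ((r:ℝ) * Real.log (r:ℝ) - (r:ℝ) + (1 + Real.log (r:ℝ))) ≤ Real.log M := by
    have h1 := log_fact_lower s
    have h2 : ∑ k ∈ Finset.range K, Real.log ((f k)! : ℕ) ≤
        ∑ k ∈ Finset.range K, ((f k : ℝ) * Real.log (f k : ℝ) - (f k : ℝ) + (1 + Real.log (f k : ℝ))) :=
      Finset.sum_le_sum (fun i _ => log_fact_upper (f i))
    have h3 := log_fact_upper r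
    linarith [hlog1]
  -- step 3: algebraic rewriting into negMulLog form
  have hsum_t : ∑ k ∈ Finset.range K, (f k : ℝ) = (t : ℝ) := by
    rw [ht]; push_cast; ring
  have halg : (s:ℝ) * ((∑ k ∈ Finset.range K, Real.negMulLog ((f k : ℝ) / (s : ℝ)))
      + Real.negMulLog ((r:ℝ) / (s : ℝ)))
      = (s:ℝ) * Real.log (s:ℝ)
        - (∑ k ∈ Finset.range K, (f k : ℝ) * Real.log (f k : ℝ))
        - (r:ℝ) * Real.log (r:ℝ) := by
    rw [mul_add, Finset.mul_sum]
    have e1 : ∀ k ∈ Finset.range K, (s:ℝ) * Real.negMulLog ((f k : ℝ) / (s : ℝ))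
        = (f k : ℝ) * Real.log (s:ℝ) - (f k : ℝ) * Real.log (f k : ℝ) :=
      fun k _ => smul_negMulLog _ _ hS0 (Nat.cast_nonneg _)
    rw [Finset.sum_congr rfl e1, smul_negMulLog _ _ hS0 (Nat.cast_nonneg _),
      Finset.sum_sub_distrib, ← Finset.sum_mul, hsum_t]
    have : (t:ℝ) * Real.log (s:ℝ) + (r:ℝ) * Real.log (s:ℝ) = (s:ℝ) * Real.log (s:ℝ) := by
      rw [← add_mul, hTR]
    linarith
  -- step 4: bound the error terms
  have herr : (∑ k ∈ Finset.range K, (1 + Real.log (f k : ℝ))) + (1 + Real.log (r:ℝ))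
      ≤ (K + 1) * (1 + Real.log (s:ℝ)) := by
    have h1 : ∑ k ∈ Finset.range K, (1 + Real.log (f k : ℝ))
        ≤ ∑ k ∈ Finset.range K, (1 + Real.log (s:ℝ)) :=
      Finset.sum_le_sum (fun i _ => by linarith [log_nat_le (hfk_le i) hs1])
    rw [Finset.sum_const, Finset.card_range, nsmul_eq_mul] at h1
    have h2 := log_nat_le hrs hs1
    nlinarith
  -- combine: S * L ≤ log M
  have hmain : (s:ℝ) * ((∑ k ∈ Finset.range K, Real.negMulLog ((f k : ℝ) / (s : ℝ)))
      + Real.negMulLog ((r:ℝ) / (s : ℝ)) - (K + 1) * (1 + Real.log (s : ℝ)) / (s : ℝ))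
      ≤ Real.log M := by
    have hdiv : (s:ℝ) * ((K + 1) * (1 + Real.log (s : ℝ)) / (s : ℝ))
        = (K + 1) * (1 + Real.log (s : ℝ)) := by field_simp
    have hsumsub : ∑ k ∈ Finset.range K, ((f k : ℝ) * Real.log (f k : ℝ) - (f k : ℝ) + (1 + Real.log (f k : ℝ)))
        = (∑ k ∈ Finset.range K, (f k : ℝ) * Real.log (f k : ℝ)) - (t:ℝ)
          + ∑ k ∈ Finset.range K, (1 + Real.log (f k : ℝ)) := by
      rw [← hsum_t]
      rw [Finset.sum_add_distrib, Finset.sum_sub_distrib]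
    rw [mul_sub, hdiv, halg]
    rw [hsumsub] at hlb
    linarith
  -- replace r/s with 1 - ∑ f k / s and divide by s
  have hrw : (r:ℝ) / (s : ℝ) = 1 - ∑ k ∈ Finset.range K, (f k : ℝ) / (s : ℝ) := by
    rw [← Finset.sum_div, hsum_t]
    field_simp
    linarith
  rw [← hrw]
  rw [le_div_iff₀ hS0]
  calc _ = (s:ℝ) * ((∑ k ∈ Finset.range K, Real.negMulLog ((f k : ℝ) / (s : ℝ)))
      + Real.negMulLog ((r:ℝ) / (s : ℝ)) - (K + 1) * (1 + Real.log (s : ℝ)) / (s : ℝ)) := by ring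
    _ ≤ Real.log M := hmain
end Aux

/-- Stirling lower bound for combinatorial entropy: if finitely supported integer
vectors `a n` have total mass `s n → ∞` and normalized profiles converging pointwise
to a probability distribution `p`, then `liminf h(a n)/s n ≥ H(p)`, where `h` is the
log of the multinomial coefficient and `H(p) ∈ [0,∞]` is the Shannon entropy. -/
theorem multinomial_entropy_liminf
    (a : ℕ → (ℕ →₀ ℕ)) (p : ℕ → ℝ)
    (hp_nonneg : ∀ k, 0 ≤ p k) (hp_sum : HasSum p 1)
    (hs : Tendsto (fun n => (((a n).sum fun _ x => x : ℕ) : ℝ)) atTop atTop)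
    (hfreq : ∀ k, Tendsto
      (fun n => (a n k : ℝ) / (((a n).sum fun _ x => x : ℕ) : ℝ))
      atTop (nhds (p k))) :
    (∑' k, ENNReal.ofReal (p k * Real.log (1 / p k)))
      ≤ Filter.liminf
          (fun n => ENNReal.ofReal
            (Real.log (Nat.multinomial (a n).support (a n))
              / (((a n).sum fun _ x => x : ℕ) : ℝ)))
          atTop := by
  have hp_le_one : ∀ k, p k ≤ 1 := fun k =>
    le_hasSum hp_sum k (fun i _ => hp_nonneg i)
  have hterm_nonneg : ∀ k, 0 ≤ p k * Real.log (1 / p k) := by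
    intro k
    rcases eq_or_lt_of_le (hp_nonneg k) with h | h
    · simp [← h]
    · apply mul_nonneg (hp_nonneg k)
      apply Real.log_nonneg
      rw [le_div_iff₀ h, one_mul]
      exact hp_le_one k
  rw [ENNReal.tsum_eq_iSup_sum]
  refine iSup_le fun F => ?_
  obtain ⟨K, hFK⟩ := F.exists_nat_subset_range
  refine le_trans (Finset.sum_le_sum_of_subset hFK) ?_
  rw [← ENNReal.ofReal_sum_of_nonneg (fun i _ => hterm_nonneg i)]
  -- notation
  set L : ℕ → ℝ := fun n =>
    (∑ k ∈ Finset.range K, Real.negMulLog ((a n k : ℝ) / (((a n).sum fun _ x => x : ℕ) : ℝ)))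
      + Real.negMulLog (1 - ∑ k ∈ Finset.range K,
          (a n k : ℝ) / (((a n).sum fun _ x => x : ℕ) : ℝ))
      - (K + 1) * (1 + Real.log (((a n).sum fun _ x => x : ℕ) : ℝ))
          / (((a n).sum fun _ x => x : ℕ) : ℝ) with hLdef
  set q : ℝ := 1 - ∑ k ∈ Finset.range K, p k with hq
  -- limits
  have h1 : Tendsto (fun n => ∑ k ∈ Finset.range K,
      Real.negMulLog ((a n k : ℝ) / (((a n).sum fun _ x => x : ℕ) : ℝ)))
      atTop (nhds (∑ k ∈ Finset.range K, Real.negMulLog (p k))) :=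
    tendsto_finset_sum _ (fun k _ =>
      (Real.continuous_negMulLog.tendsto _).comp (hfreq k))
  have h2 : Tendsto (fun n => Real.negMulLog (1 - ∑ k ∈ Finset.range K,
      (a n k : ℝ) / (((a n).sum fun _ x => x : ℕ) : ℝ)))
      atTop (nhds (Real.negMulLog q)) := by
    apply (Real.continuous_negMulLog.tendsto _).comp
    rw [hq]
    exact tendsto_const_nhds.sub (tendsto_finset_sum _ (fun k _ => hfreq k))
  have h3 : Tendsto (fun n => (K + 1 : ℝ) * (1 + Real.log (((a n).sum fun _ x => x : ℕ) : ℝ))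
      / (((a n).sum fun _ x => x : ℕ) : ℝ)) atTop (nhds 0) := by
    have hinv : Tendsto (fun n => ((((a n).sum fun _ x => x : ℕ) : ℝ))⁻¹) atTop (nhds 0) :=
      tendsto_inv_atTop_zero.comp hs
    have hlogdiv : Tendsto (fun n => Real.log (((a n).sum fun _ x => x : ℕ) : ℝ)
        / (((a n).sum fun _ x => x : ℕ) : ℝ)) atTop (nhds 0) :=
      (Real.isLittleO_log_id_atTop.tendsto_div_nhds_zero).comp hs
    have heq : ∀ n, (K + 1 : ℝ) * (1 + Real.log (((a n).sum fun _ x => x : ℕ) : ℝ))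
        / (((a n).sum fun _ x => x : ℕ) : ℝ)
        = (K + 1 : ℝ) * ((((a n).sum fun _ x => x : ℕ) : ℝ))⁻¹
          + (K + 1 : ℝ) * (Real.log (((a n).sum fun _ x => x : ℕ) : ℝ)
              / (((a n).sum fun _ x => x : ℕ) : ℝ)) := by
      intro n
      field_simp
    simp_rw [heq]
    have := ((hinv.const_mul (K + 1 : ℝ)).add (hlogdiv.const_mul (K + 1 : ℝ)))
    simpa using this
  have hL : Tendsto L atTop
      (nhds ((∑ k ∈ Finset.range K, Real.negMulLog (p k)) + Real.negMulLog q)) := by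
    have := (h1.add h2).sub h3
    rw [sub_zero] at this
    exact this
  -- eventual bound
  have hev : ∀ᶠ n in atTop, ENNReal.ofReal (L n) ≤ ENNReal.ofReal
      (Real.log (Nat.multinomial (a n).support (a n))
        / (((a n).sum fun _ x => x : ℕ) : ℝ)) := by
    filter_upwards [hs.eventually_ge_atTop 1] with n hn
    apply ENNReal.ofReal_le_ofReal
    have hs1 : 1 ≤ ((a n).sum fun _ x => x : ℕ) := by exact_mod_cast hn
    exact per_bound (a n) K _ rfl hs1
  -- final comparison of constants
  have hq0 : 0 ≤ q := by
    rw [hq]; linarith [sum_le_hasSum (Finset.range K) (fun i _ => hp_nonneg i) hp_sum]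
  have hq1 : q ≤ 1 := by
    rw [hq]
    have : 0 ≤ ∑ k ∈ Finset.range K, p k := Finset.sum_nonneg (fun i _ => hp_nonneg i)
    linarith
  have hC : ∑ k ∈ Finset.range K, p k * Real.log (1 / p k)
      ≤ (∑ k ∈ Finset.range K, Real.negMulLog (p k)) + Real.negMulLog q := by
    have he : ∀ k ∈ Finset.range K, p k * Real.log (1 / p k) = Real.negMulLog (p k) := by
      intro k _
      rw [one_div, Real.log_inv, Real.negMulLog]; ring
    rw [Finset.sum_congr rfl he]
    linarith [Real.negMulLog_nonneg hq0 hq1]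
  calc ENNReal.ofReal (∑ k ∈ Finset.range K, p k * Real.log (1 / p k))
      ≤ ENNReal.ofReal ((∑ k ∈ Finset.range K, Real.negMulLog (p k)) + Real.negMulLog q) :=
        ENNReal.ofReal_le_ofReal hC
    _ = Filter.liminf (fun n => ENNReal.ofReal (L n)) atTop :=
        ((ENNReal.continuous_ofReal.tendsto _).comp hL).liminf_eq.symm
    _ ≤ _ := Filter.liminf_le_liminf hev
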